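/- Let X1, X2 be iid St. Petersburg lotteries (P(X = 2^k) = 2^{−k} for k ∈ ℕ). Then X1 ≤_st (X1 + X2)/2. -/

import Mathlib

open MeasureTheory ProbabilityTheory Real Finset

noncomputable section

variable {Ω : Type*} [MeasurableSpace Ω]

/-- `X ~ Pareto(α)` : cdf `1 - x^(-α)` for `x ≥ 1`. -/
def IsPareto (P : Measure Ω) (α : ℝ) (X : Ω → ℝ) : Prop :=
  Measurable X ∧ (∀ x : ℝ, 1 ≤ x → P {ω | x < X ω} = ENNReal.ofReal (x ^ (-α))) ∧
    P {ω | X ω < 1} = 0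

/-- the increasing rearrangement of a vector -/
def sortedVec {n : ℕ} (f : Fin n → ℝ) : Fin n → ℝ := f ∘ Tuple.sort f

/-- `MajorizedBy θ η` : `θ ⪯ η`, i.e. equal sums and the sum of the `k` smallest
components of `θ` is at least that of `η` for each `k`. -/
def MajorizedBy {n : ℕ} (θ η : Fin n → ℝ) : Prop :=
  (∑ i, θ i = ∑ i, η i) ∧
  ∀ k : ℕ, k ≤ n →
    ∑ i ∈ Finset.univ.filter (fun i : Fin n => (i : ℕ) < k), sortedVec η i ≤
    ∑ i ∈ Finset.univ.filter (fun i : Fin n => (i : ℕ) < k), sortedVec θ i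

/-- St. Petersburg lottery: takes value `2^k` with probability `2^(-k)` for `k ≥ 1`. -/
def IsStPetersburg (P : Measure Ω) (X : Ω → ℝ) : Prop :=
  Measurable X ∧ ∀ k : ℕ, 1 ≤ k → P {ω | X ω = 2 ^ k} = ((2 : ENNReal) ^ k)⁻¹

lemma aux_key (n : ℕ) : ((2:ENNReal) ^ (n+1))⁻¹ + ((2:ENNReal) ^ (n+1))⁻¹ = ((2:ENNReal) ^ n)⁻¹ := by
  rw [ENNReal.inv_pow, ENNReal.inv_pow, pow_succ, ← mul_add,
    ENNReal.inv_two_add_inv_two, mul_one]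

lemma aux_geom_fin (m : ℕ) :
    ∑ k ∈ Finset.Icc 1 m, ((2:ENNReal) ^ k)⁻¹ + ((2:ENNReal) ^ m)⁻¹ = 1 := by
  induction m with
  | zero => simp
  | succ n ih =>
    rw [Finset.sum_Icc_succ_top (Nat.succ_le_succ n.zero_le), add_assoc, aux_key]
    exact ih

lemma aux_tsum : ∑' k : ℕ, ((2:ENNReal) ^ (k+1))⁻¹ = 1 := by
  simp_rw [ENNReal.inv_pow]
  rw [ENNReal.tsum_geometric_add_one, ENNReal.one_sub_inv_two, inv_inv]
  exact ENNReal.inv_mul_cancel two_ne_zero ENNReal.ofNat_ne_top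

lemma pow_two_inj : Function.Injective (fun k : ℕ => (2:ℝ) ^ k) :=
  (pow_right_strictMono₀ (one_lt_two)).injective

lemma bad_null (P : Measure Ω) [IsProbabilityMeasure P] {X : Ω → ℝ}
    (h : IsStPetersburg P X) : P {ω | ∀ k : ℕ, 1 ≤ k → X ω ≠ 2 ^ k} = 0 := by
  obtain ⟨hm, hp⟩ := h
  set f : ℕ → Set Ω := fun k => X ⁻¹' {(2:ℝ) ^ (k+1)} with hf
  have hmeas : ∀ k, MeasurableSet (f k) := fun k => hm (measurableSet_singleton _)
  have hdisj : Pairwise (Function.onFun Disjoint f) := by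
    intro i j hij
    refine Set.disjoint_left.mpr fun ω hi hj => ?_
    have : (2:ℝ) ^ (i+1) = 2 ^ (j+1) := by
      rw [← Set.mem_singleton_iff.mp hi, ← Set.mem_singleton_iff.mp hj]
    exact hij (by simpa using pow_two_inj this)
  have hU : P (⋃ k, f k) = 1 := by
    rw [measure_iUnion hdisj hmeas]
    have : ∀ k : ℕ, P (f k) = ((2:ENNReal) ^ (k+1))⁻¹ := fun k =>
      hp (k+1) (Nat.succ_le_succ k.zero_le)
    simp_rw [this]
    exact aux_tsum
  have hsub : {ω | ∀ k : ℕ, 1 ≤ k → X ω ≠ 2 ^ k} ⊆ (⋃ k, f k)ᶜ := by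
    intro ω hω
    simp only [Set.mem_compl_iff, Set.mem_iUnion, not_exists]
    intro k hk
    exact hω (k+1) (Nat.succ_le_succ k.zero_le) (Set.mem_singleton_iff.mp hk)
  have : P ((⋃ k, f k)ᶜ) = 0 := by
    rw [measure_compl (MeasurableSet.iUnion hmeas) (measure_ne_top P _), hU,
      measure_univ, tsub_self]
  exact le_antisymm (le_trans (measure_mono hsub) this.le) (zero_le)

lemma cdf_pow (P : Measure Ω) [IsProbabilityMeasure P] {X : Ω → ℝ}
    (h : IsStPetersburg P X) (m : ℕ) :
    P (X ⁻¹' Set.Iic ((2:ℝ) ^ m)) + ((2:ENNReal) ^ m)⁻¹ = 1 := by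
  obtain ⟨hm, hp⟩ := h
  have hbad := bad_null P ⟨hm, hp⟩
  set U : Set Ω := ⋃ k ∈ Finset.Icc 1 m, X ⁻¹' {(2:ℝ) ^ k} with hUdef
  have hmeas : ∀ k : ℕ, MeasurableSet (X ⁻¹' {(2:ℝ) ^ k}) :=
    fun k => hm (measurableSet_singleton _)
  have hPU : P U = ∑ k ∈ Finset.Icc 1 m, ((2:ENNReal) ^ k)⁻¹ := by
    rw [hUdef, measure_biUnion_finset ?_ (fun k _ => hmeas k)]
    · exact Finset.sum_congr rfl fun k hk => hp k (Finset.mem_Icc.mp hk).1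
    · intro i _ j _ hij
      refine Set.disjoint_left.mpr fun ω hi hj => ?_
      have : (2:ℝ) ^ i = 2 ^ j := by
        rw [← Set.mem_singleton_iff.mp hi, ← Set.mem_singleton_iff.mp hj]
      exact hij (pow_two_inj this)
  have hsub1 : U ⊆ X ⁻¹' Set.Iic ((2:ℝ) ^ m) := by
    intro ω hω
    simp only [hUdef, Set.mem_iUnion] at hω
    obtain ⟨k, hk, hωk⟩ := hω
    have hkm := (Finset.mem_Icc.mp hk).2
    have : X ω = 2 ^ k := Set.mem_singleton_iff.mp hωk
    simp only [Set.mem_preimage, Set.mem_Iic, this]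
    exact pow_le_pow_right₀ one_le_two hkm
  have hsub2 : X ⁻¹' Set.Iic ((2:ℝ) ^ m) ⊆
      U ∪ {ω | ∀ k : ℕ, 1 ≤ k → X ω ≠ 2 ^ k} := by
    intro ω hω
    by_cases hb : ∀ k : ℕ, 1 ≤ k → X ω ≠ 2 ^ k
    · exact Or.inr hb
    · push_neg at hb
      obtain ⟨k, hk1, hkeq⟩ := hb
      left
      have hle : (2:ℝ) ^ k ≤ 2 ^ m := by
        rw [← hkeq]; exact hω
      have hkm : k ≤ m := (pow_le_pow_iff_right₀ one_lt_two).mp hle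
      simp only [hUdef, Set.mem_iUnion]
      exact ⟨k, Finset.mem_Icc.mpr ⟨hk1, hkm⟩, hkeq⟩
  have heq : P (X ⁻¹' Set.Iic ((2:ℝ) ^ m)) = P U :=
    le_antisymm
      (le_trans (measure_mono hsub2) (by
        refine le_trans (measure_union_le _ _) ?_
        rw [hbad, add_zero]))
      (measure_mono hsub1)
  rw [heq, hPU]
  exact aux_geom_fin m

theorem stmt_8 (P : Measure Ω) [IsProbabilityMeasure P]
    (X₁ X₂ : Ω → ℝ) (h₁ : IsStPetersburg P X₁) (h₂ : IsStPetersburg P X₂)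
    (hind : IndepFun X₁ X₂ P) :
    ∀ x : ℝ, P {ω | (X₁ ω + X₂ ω) / 2 ≤ x} ≤ P {ω | X₁ ω ≤ x} := by
  intro x
  have hbad1 := bad_null P h₁
  have hbad2 := bad_null P h₂
  by_cases hx : x < 2
  · -- LHS is zero
    have hsub : {ω | (X₁ ω + X₂ ω) / 2 ≤ x} ⊆
        {ω | ∀ k : ℕ, 1 ≤ k → X₁ ω ≠ 2 ^ k} ∪ {ω | ∀ k : ℕ, 1 ≤ k → X₂ ω ≠ 2 ^ k} := by
      intro ω hω
      by_cases hb1 : ∀ k : ℕ, 1 ≤ k → X₁ ω ≠ 2 ^ k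
      · exact Or.inl hb1
      by_cases hb2 : ∀ k : ℕ, 1 ≤ k → X₂ ω ≠ 2 ^ k
      · exact Or.inr hb2
      exfalso
      push_neg at hb1 hb2
      obtain ⟨j, hj1, hj2⟩ := hb1
      obtain ⟨k, hk1, hk2⟩ := hb2
      have h2j : (2:ℝ) ≤ 2 ^ j := le_self_pow₀ one_le_two (by omega)
      have h2k : (2:ℝ) ≤ 2 ^ k := le_self_pow₀ one_le_two (by omega)
      have hω' : (X₁ ω + X₂ ω) / 2 ≤ x := hω
      rw [hj2, hk2] at hω'
      linarith
    calc P {ω | (X₁ ω + X₂ ω) / 2 ≤ x}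
        ≤ P ({ω | ∀ k : ℕ, 1 ≤ k → X₁ ω ≠ 2 ^ k} ∪ {ω | ∀ k : ℕ, 1 ≤ k → X₂ ω ≠ 2 ^ k}) :=
          measure_mono hsub
      _ ≤ P {ω | ∀ k : ℕ, 1 ≤ k → X₁ ω ≠ 2 ^ k} + P {ω | ∀ k : ℕ, 1 ≤ k → X₂ ω ≠ 2 ^ k} :=
          measure_union_le _ _
      _ = 0 := by rw [hbad1, hbad2, add_zero]
      _ ≤ P {ω | X₁ ω ≤ x} := zero_le
  · push_neg at hx
    have hx0 : (0:ℝ) ≤ x := by linarith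
    set n : ℕ := ⌊x⌋₊ with hn
    have hn2 : 2 ≤ n := Nat.le_floor (by exact_mod_cast hx)
    set m : ℕ := Nat.log 2 n with hmdef
    have hm1 : 1 ≤ m := Nat.log_pos one_lt_two hn2
    have hlow : (2:ℝ) ^ m ≤ x := by
      have h1 : (2:ℕ) ^ m ≤ n := Nat.pow_log_le_self 2 (by omega)
      have h2 : ((n:ℝ)) ≤ x := Nat.floor_le hx0
      calc (2:ℝ) ^ m = ((2^m : ℕ) : ℝ) := by push_cast; ring
        _ ≤ (n:ℝ) := by exact_mod_cast h1
        _ ≤ x := h2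
    have hup : x < (2:ℝ) ^ (m+1) := by
      have h1 : n < 2 ^ (m+1) := Nat.lt_pow_succ_log_self one_lt_two n
      have h2 : x < (n:ℝ) + 1 := Nat.lt_floor_add_one x
      have h3 : (n:ℝ) + 1 ≤ ((2^(m+1) : ℕ) : ℝ) := by exact_mod_cast h1
      calc x < (n:ℝ) + 1 := h2
        _ ≤ ((2^(m+1) : ℕ) : ℝ) := h3
        _ = (2:ℝ) ^ (m+1) := by push_cast; ring
    -- sets
    set SI : Set ℝ := Set.Iic ((2:ℝ) ^ m) with hSI
    set ST : Set ℝ := {(2:ℝ) ^ (m+1)} with hST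
    have hSImeas : MeasurableSet SI := measurableSet_Iic
    have hSTmeas : MeasurableSet ST := measurableSet_singleton _
    set q : ENNReal := P (X₁ ⁻¹' SI) with hq
    set p : ENNReal := ((2:ENNReal) ^ (m+1))⁻¹ with hp
    have hq1 : q + ((2:ENNReal) ^ m)⁻¹ = 1 := cdf_pow P h₁ m
    have hq2' : P (X₂ ⁻¹' SI) + ((2:ENNReal) ^ m)⁻¹ = 1 := cdf_pow P h₂ m
    have hq2 : P (X₂ ⁻¹' SI) = q := by
      have hfin : ((2:ENNReal) ^ m)⁻¹ ≠ ⊤ := by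
        simp [ENNReal.inv_ne_top]
      have := hq1.trans hq2'.symm
      exact (ENNReal.add_left_inj hfin).mp this.symm
    have hpT1 : P (X₁ ⁻¹' ST) = p := by
      have := h₁.2 (m+1) (Nat.succ_le_succ m.zero_le)
      simpa [hST, Set.preimage, Set.mem_singleton_iff] using this
    have hpT2 : P (X₂ ⁻¹' ST) = p := by
      have := h₂.2 (m+1) (Nat.succ_le_succ m.zero_le)
      simpa [hST, Set.preimage, Set.mem_singleton_iff] using this
    -- the three good sets
    have hPA : P (X₁ ⁻¹' SI ∩ X₂ ⁻¹' SI) = q * q := by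
      rw [hind.measure_inter_preimage_eq_mul _ _ hSImeas hSImeas, hq2]
    have hPB : P (X₁ ⁻¹' ST ∩ X₂ ⁻¹' SI) = p * q := by
      rw [hind.measure_inter_preimage_eq_mul _ _ hSTmeas hSImeas, hpT1, hq2]
    have hPC : P (X₁ ⁻¹' SI ∩ X₂ ⁻¹' ST) = q * p := by
      rw [hind.measure_inter_preimage_eq_mul _ _ hSImeas hSTmeas, hpT2]
    -- inclusion
    have hsub : {ω | (X₁ ω + X₂ ω) / 2 ≤ x} ⊆
        ((X₁ ⁻¹' SI ∩ X₂ ⁻¹' SI) ∪ (X₁ ⁻¹' ST ∩ X₂ ⁻¹' SI) ∪ (X₁ ⁻¹' SI ∩ X₂ ⁻¹' ST)) ∪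
        ({ω | ∀ k : ℕ, 1 ≤ k → X₁ ω ≠ 2 ^ k} ∪ {ω | ∀ k : ℕ, 1 ≤ k → X₂ ω ≠ 2 ^ k}) := by
      intro ω hω
      by_cases hb1 : ∀ k : ℕ, 1 ≤ k → X₁ ω ≠ 2 ^ k
      · exact Or.inr (Or.inl hb1)
      by_cases hb2 : ∀ k : ℕ, 1 ≤ k → X₂ ω ≠ 2 ^ k
      · exact Or.inr (Or.inr hb2)
      push_neg at hb1 hb2
      obtain ⟨j, hj1, hjeq⟩ := hb1
      obtain ⟨k, hk1, hkeq⟩ := hb2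
      have hsum : (2:ℝ) ^ j + 2 ^ k ≤ 2 * x := by
        have hω' : (X₁ ω + X₂ ω) / 2 ≤ x := hω
        rw [hjeq, hkeq] at hω'
        linarith
      have h2x : 2 * x < (2:ℝ) ^ (m+2) := by
        have : (2:ℝ) ^ (m+2) = 2 * 2 ^ (m+1) := by ring
        linarith
      have hjpos : (0:ℝ) < 2 ^ j := by positivity
      have hkpos : (0:ℝ) < 2 ^ k := by positivity
      have hjlt : (2:ℝ) ^ j < 2 ^ (m+2) := by linarith
      have hklt : (2:ℝ) ^ k < 2 ^ (m+2) := by linarith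
      have hjle : j ≤ m + 1 := by
        have := (pow_lt_pow_iff_right₀ (one_lt_two : (1:ℝ) < 2)).mp hjlt
        omega
      have hkle : k ≤ m + 1 := by
        have := (pow_lt_pow_iff_right₀ (one_lt_two : (1:ℝ) < 2)).mp hklt
        omega
      left
      by_cases hj : j = m + 1
      · -- X₁ = 2^(m+1), show X₂ ≤ 2^m
        have hklem : k ≤ m := by
          have hlt : (2:ℝ) ^ k < 2 ^ (m+1) := by
            have he : (2:ℝ) ^ (m+2) = 2 ^ (m+1) + 2 ^ (m+1) := by ring
            rw [hj] at hsum
            linarith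
          have := (pow_lt_pow_iff_right₀ (one_lt_two : (1:ℝ) < 2)).mp hlt
          omega
        refine Or.inl (Or.inr ⟨?_, ?_⟩)
        · simp only [Set.mem_preimage, hST, Set.mem_singleton_iff, hjeq, hj]
        · simp only [Set.mem_preimage, hSI, Set.mem_Iic, hkeq]
          exact pow_le_pow_right₀ one_le_two hklem
      · have hjlem : j ≤ m := by omega
        have hX1le : X₁ ω ≤ (2:ℝ) ^ m := by
          rw [hjeq]; exact pow_le_pow_right₀ one_le_two hjlem
        by_cases hk : k = m + 1
        · refine Or.inr ⟨?_, ?_⟩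
          · simpa [hSI] using hX1le
          · simp only [Set.mem_preimage, hST, Set.mem_singleton_iff, hkeq, hk]
        · have hklem : k ≤ m := by omega
          refine Or.inl (Or.inl ⟨?_, ?_⟩)
          · simpa [hSI] using hX1le
          · simp only [Set.mem_preimage, hSI, Set.mem_Iic, hkeq]
            exact pow_le_pow_right₀ one_le_two hklem
    -- put it together
    have hstep : P {ω | (X₁ ω + X₂ ω) / 2 ≤ x} ≤ q * q + p * q + q * p := by
      refine le_trans (measure_mono hsub) ?_
      refine le_trans (measure_union_le _ _) ?_
      have hz : P ({ω | ∀ k : ℕ, 1 ≤ k → X₁ ω ≠ 2 ^ k} ∪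
          {ω | ∀ k : ℕ, 1 ≤ k → X₂ ω ≠ 2 ^ k}) = 0 := by
        refine le_antisymm (le_trans (measure_union_le _ _) ?_) (zero_le)
        rw [hbad1, hbad2, add_zero]
      rw [hz, add_zero]
      refine le_trans (measure_union_le _ _) ?_
      rw [hPC]
      refine add_le_add_left ?_ _
      refine le_trans (measure_union_le _ _) ?_
      rw [hPA, hPB]
    have hqp : q * q + p * q + q * p = q := by
      have hpp : p + p = ((2:ENNReal) ^ m)⁻¹ := aux_key m
      calc q * q + p * q + q * p = q * (q + (p + p)) := by ring
        _ = q * 1 := by rw [hpp, hq1]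
        _ = q := mul_one q
    refine le_trans hstep ?_
    rw [hqp]
    refine measure_mono ?_
    intro ω hω
    have : X₁ ω ≤ (2:ℝ) ^ m := hω
    simp only [Set.mem_setOf_eq]
    linarith
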